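/- The abelianization of the group H presented on generators a,b,c,d,e,f with relators abcdef, ab⁻¹c²f⁻¹e²d⁻¹, a²fc²bed, ad⁻²cb⁻²ef⁻¹, ad²cf²eb², af⁻²cd⁻¹eb⁻² is the trivial group. -/

import Mathlib

namespace Stmt0

/-- The generators `a, b, c, d, e, f` of the free group on six letters. -/
def a : FreeGroup (Fin 6) := FreeGroup.of 0
def b : FreeGroup (Fin 6) := FreeGroup.of 1
def c : FreeGroup (Fin 6) := FreeGroup.of 2
def d : FreeGroup (Fin 6) := FreeGroup.of 3
def e : FreeGroup (Fin 6) := FreeGroup.of 4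
def f : FreeGroup (Fin 6) := FreeGroup.of 5

/-- The six relators of Leary's group `H`. -/
def rels : Set (FreeGroup (Fin 6)) :=
  { a * b * c * d * e * f,
    a * b⁻¹ * c ^ 2 * f⁻¹ * e ^ 2 * d⁻¹,
    a ^ 2 * f * c ^ 2 * b * e * d,
    a * d⁻¹ ^ 2 * c * b⁻¹ ^ 2 * e * f⁻¹,
    a * d ^ 2 * c * f ^ 2 * e * b ^ 2,
    a * f⁻¹ ^ 2 * c * d⁻¹ * e * b⁻¹ ^ 2 }

/-- The group `H = ⟨a,…,f ∣ the six relators⟩`. -/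
abbrev H := PresentedGroup rels

lemma add_key {G : Type*} [AddCommGroup G] (A B C D E F : G)
    (h1 : A + B + C + D + E + F = 0)
    (h2 : A - B + 2 • C - F + 2 • E - D = 0)
    (h3 : 2 • A + F + 2 • C + B + E + D = 0)
    (h4 : A - 2 • D + C - 2 • B + E - F = 0)
    (h5 : A + 2 • D + C + 2 • F + E + 2 • B = 0)
    (h6 : A - 2 • F + C - D + E - 2 • B = 0) :
    A = 0 ∧ B = 0 ∧ C = 0 ∧ D = 0 ∧ E = 0 ∧ F = 0 := by
  refine ⟨?_, ?_, ?_, ?_, ?_, ?_⟩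
  · have : A = 5 • (A + B + C + D + E + F) - (A - B + 2 • C - F + 2 • E - D)
        - 3 • (A + 2 • D + C + 2 • F + E + 2 • B) := by abel
    rw [h1, h2, h5] at this; simpa using this
  · have : B = 7 • (A + B + C + D + E + F) - (A - 2 • D + C - 2 • B + E - F)
        - 5 • (A + 2 • D + C + 2 • F + E + 2 • B) - (A - 2 • F + C - D + E - 2 • B) := by abel
    rw [h1, h4, h5, h6] at this; simpa using this
  · have : C = -(6 • (A + B + C + D + E + F)) + (A - B + 2 • C - F + 2 • E - D)
        + (2 • A + F + 2 • C + B + E + D) + 3 • (A + 2 • D + C + 2 • F + E + 2 • B) := by abel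
    rw [h1, h2, h3, h5] at this; simpa using this
  · have : D = -(4 • (A + B + C + D + E + F)) + 3 • (A + 2 • D + C + 2 • F + E + 2 • B)
        + (A - 2 • F + C - D + E - 2 • B) := by abel
    rw [h1, h5, h6] at this; simpa using this
  · have : E = 3 • (A + B + C + D + E + F) - (2 • A + F + 2 • C + B + E + D)
        - (A + 2 • D + C + 2 • F + E + 2 • B) := by abel
    rw [h1, h3, h5] at this; simpa using this
  · have : F = -(4 • (A + B + C + D + E + F)) + (A - 2 • D + C - 2 • B + E - F)
        + 3 • (A + 2 • D + C + 2 • F + E + 2 • B) := by abel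
    rw [h1, h4, h5] at this; simpa using this

lemma mul_key {G : Type*} [CommGroup G] (A B C D E F : G)
    (h1 : A * B * C * D * E * F = 1)
    (h2 : A * B⁻¹ * C ^ 2 * F⁻¹ * E ^ 2 * D⁻¹ = 1)
    (h3 : A ^ 2 * F * C ^ 2 * B * E * D = 1)
    (h4 : A * D⁻¹ ^ 2 * C * B⁻¹ ^ 2 * E * F⁻¹ = 1)
    (h5 : A * D ^ 2 * C * F ^ 2 * E * B ^ 2 = 1)
    (h6 : A * F⁻¹ ^ 2 * C * D⁻¹ * E * B⁻¹ ^ 2 = 1) :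
    A = 1 ∧ B = 1 ∧ C = 1 ∧ D = 1 ∧ E = 1 ∧ F = 1 := by
  have t1 := congrArg Additive.ofMul h1
  have t2 := congrArg Additive.ofMul h2
  have t3 := congrArg Additive.ofMul h3
  have t4 := congrArg Additive.ofMul h4
  have t5 := congrArg Additive.ofMul h5
  have t6 := congrArg Additive.ofMul h6
  simp only [ofMul_mul, ofMul_inv, ofMul_pow, ofMul_one] at t1 t2 t3 t4 t5 t6
  set A' := Additive.ofMul A
  set B' := Additive.ofMul B
  set C' := Additive.ofMul C
  set D' := Additive.ofMul D
  set E' := Additive.ofMul E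
  set F' := Additive.ofMul F
  have h1' : A' + B' + C' + D' + E' + F' = 0 := by rw [← t1]
  have h2' : A' - B' + 2 • C' - F' + 2 • E' - D' = 0 := by rw [← t2] <;> try abel
  have h3' : 2 • A' + F' + 2 • C' + B' + E' + D' = 0 := by rw [← t3] <;> try abel
  have h4' : A' - 2 • D' + C' - 2 • B' + E' - F' = 0 := by rw [← t4] <;> try abel
  have h5' : A' + 2 • D' + C' + 2 • F' + E' + 2 • B' = 0 := by rw [← t5] <;> try abel
  have h6' : A' - 2 • F' + C' - D' + E' - 2 • B' = 0 := by rw [← t6] <;> try abel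
  obtain ⟨hA, hB, hC, hD, hE, hF⟩ := add_key A' B' C' D' E' F' h1' h2' h3' h4' h5' h6'
  exact ⟨ofMul_eq_zero.mp hA, ofMul_eq_zero.mp hB, ofMul_eq_zero.mp hC,
    ofMul_eq_zero.mp hD, ofMul_eq_zero.mp hE, ofMul_eq_zero.mp hF⟩

/-- The abelianization of `H` is trivial. -/
theorem abelianization_H_trivial : ∀ x : Abelianization H, x = 1 := by
  set ψ : FreeGroup (Fin 6) →* Abelianization H :=
    (Abelianization.of).comp (QuotientGroup.mk' (Subgroup.normalClosure rels)) with hψdef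
  have key : ∀ r ∈ rels, ψ r = 1 := by
    intro r hr
    have : (QuotientGroup.mk' (Subgroup.normalClosure rels) r : H) = 1 :=
      (QuotientGroup.eq_one_iff r).mpr (Subgroup.subset_normalClosure hr)
    simp only [hψdef, MonoidHom.comp_apply]
    exact (congrArg (Abelianization.of (G := H)) this).trans (map_one _)
  have m1 : a * b * c * d * e * f ∈ rels := Set.mem_insert _ _
  have m2 : a * b⁻¹ * c ^ 2 * f⁻¹ * e ^ 2 * d⁻¹ ∈ rels :=
    Set.mem_insert_of_mem _ (Set.mem_insert _ _)
  have m3 : a ^ 2 * f * c ^ 2 * b * e * d ∈ rels :=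
    Set.mem_insert_of_mem _ (Set.mem_insert_of_mem _ (Set.mem_insert _ _))
  have m4 : a * d⁻¹ ^ 2 * c * b⁻¹ ^ 2 * e * f⁻¹ ∈ rels :=
    Set.mem_insert_of_mem _ (Set.mem_insert_of_mem _ (Set.mem_insert_of_mem _ (Set.mem_insert _ _)))
  have m5 : a * d ^ 2 * c * f ^ 2 * e * b ^ 2 ∈ rels :=
    Set.mem_insert_of_mem _ (Set.mem_insert_of_mem _ (Set.mem_insert_of_mem _
      (Set.mem_insert_of_mem _ (Set.mem_insert _ _))))
  have m6 : a * f⁻¹ ^ 2 * c * d⁻¹ * e * b⁻¹ ^ 2 ∈ rels :=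
    Set.mem_insert_of_mem _ (Set.mem_insert_of_mem _ (Set.mem_insert_of_mem _
      (Set.mem_insert_of_mem _ (Set.mem_insert_of_mem _ rfl))))
  have h1 : ψ a * ψ b * ψ c * ψ d * ψ e * ψ f = 1 := by
    simpa only [map_mul] using key _ m1
  have h2 : ψ a * (ψ b)⁻¹ * (ψ c) ^ 2 * (ψ f)⁻¹ * (ψ e) ^ 2 * (ψ d)⁻¹ = 1 := by
    simpa only [map_mul, map_inv, map_pow] using key _ m2
  have h3 : (ψ a) ^ 2 * ψ f * (ψ c) ^ 2 * ψ b * ψ e * ψ d = 1 := by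
    simpa only [map_mul, map_inv, map_pow] using key _ m3
  have h4 : ψ a * (ψ d)⁻¹ ^ 2 * ψ c * (ψ b)⁻¹ ^ 2 * ψ e * (ψ f)⁻¹ = 1 := by
    simpa only [map_mul, map_inv, map_pow] using key _ m4
  have h5 : ψ a * (ψ d) ^ 2 * ψ c * (ψ f) ^ 2 * ψ e * (ψ b) ^ 2 = 1 := by
    simpa only [map_mul, map_inv, map_pow] using key _ m5
  have h6 : ψ a * (ψ f)⁻¹ ^ 2 * ψ c * (ψ d)⁻¹ * ψ e * (ψ b)⁻¹ ^ 2 = 1 := by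
    simpa only [map_mul, map_inv, map_pow] using key _ m6
  obtain ⟨hA, hB, hC, hD, hE, hF⟩ := mul_key _ _ _ _ _ _ h1 h2 h3 h4 h5 h6
  have hgen : ∀ i : Fin 6, ψ (FreeGroup.of i) = 1 := by
    intro i
    fin_cases i
    · exact hA
    · exact hB
    · exact hC
    · exact hD
    · exact hE
    · exact hF
  have hψ1 : ψ = 1 := FreeGroup.ext_hom ψ 1 (by simpa using hgen)
  intro x
  refine QuotientGroup.induction_on x ?_
  intro h
  refine QuotientGroup.induction_on h ?_
  intro g
  exact DFunLike.congr_fun hψ1 g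


end Stmt0
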